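/- Let G(v, h) be defined layerwise by v_{i+1} = a_i(W_i^{(v)}(v_i ∘ s_i(h)) + W_i^{(α)}(α ∘ t_i(h)) + c_i(h)) where each a_i is convex and nondecreasing (componentwise), each W_i^{(v)} has nonnegative entries, s_i(h) is componentwise nonnegative, and t_i, c_i are arbitrary functions of h. Then for each fixed h, α ↦ G(α, h) is convex. -/

import Mathlib

private lemma picnn_affine_convexOn {n : ℕ} (w : Fin n → ℝ) (b : ℝ) :
    ConvexOn ℝ Set.univ (fun α : Fin n → ℝ => (∑ l, w l * α l) + b) := by
  refine ⟨convex_univ, fun x _ y _ p q hp hq hpq => le_of_eq ?_⟩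
  have : ∀ l ∈ Finset.univ, w l * (p • x + q • y) l
      = p * (w l * x l) + q * (w l * y l) := by
    intro l _; simp [Pi.add_apply]; ring
  show (∑ l, w l * (p • x + q • y) l) + b
    = p • ((∑ l, w l * x l) + b) + q • ((∑ l, w l * y l) + b)
  rw [Finset.sum_congr rfl this, Finset.sum_add_distrib, ← Finset.mul_sum, ← Finset.mul_sum]
  simp only [smul_eq_mul]
  have hb : p * b + q * b = b := by rw [← add_mul, hpq, one_mul]
  linarith

private lemma picnn_sum_convexOn {n : ℕ} {ι : Type*} (T : Finset ι)
    (f : ι → (Fin n → ℝ) → ℝ) (h : ∀ i ∈ T, ConvexOn ℝ Set.univ (f i)) :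
    ConvexOn ℝ Set.univ (fun x => ∑ i ∈ T, f i x) := by
  classical
  induction T using Finset.cons_induction with
  | empty => simpa using convexOn_const (0:ℝ) convex_univ
  | cons i T hi ih =>
    simp only [Finset.sum_cons]
    exact (h i (Finset.mem_cons_self i T)).add
      (ih fun j hj => h j (Finset.mem_cons_of_mem hj))

private lemma picnn_comp_convexOn {n : ℕ} {g : ℝ → ℝ}
    (hg : ConvexOn ℝ Set.univ g) (hm : Monotone g)
    {f : (Fin n → ℝ) → ℝ} (hf : ConvexOn ℝ Set.univ f) :
    ConvexOn ℝ Set.univ (fun x => g (f x)) :=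
  ⟨convex_univ, fun x _ y _ p q hp hq hpq =>
    (hm (hf.2 trivial trivial hp hq hpq)).trans
      (hg.2 trivial trivial hp hq hpq)⟩

/-- Convexity of the partially input convex neural network (PICNN) in the input `α`,
for a fixed conditioning input `h` (whose contribution is absorbed into the fixed
data `s i`, `t i`, `c i`):
layers `v (i+1) α j = a i ((W^(v) i) (v i α ∘ s i) + (W^(α) i) (α ∘ t i) + c i) j`,
where each activation `a i` is convex and nondecreasing, each `W^(v) i` has
nonnegative entries, each `s i` is componentwise nonnegative, and the first layer
`v 0` is affine in `α`. Then every component of every layer — in particular the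
output `G(α, h) = v k α` — is convex in `α`. -/
theorem picnn_convex_in_alpha
    {n : ℕ} {d : ℕ → ℕ} (k : ℕ)
    (v : (i : ℕ) → (Fin n → ℝ) → Fin (d i) → ℝ)
    (a : ℕ → ℝ → ℝ)
    (Wv : (i : ℕ) → Fin (d (i + 1)) → Fin (d i) → ℝ)
    (Wα : (i : ℕ) → Fin (d (i + 1)) → Fin n → ℝ)
    (s : (i : ℕ) → Fin (d i) → ℝ)
    (t : (i : ℕ) → Fin n → ℝ)
    (c : (i : ℕ) → Fin (d (i + 1)) → ℝ)
    (ha_conv : ∀ i, ConvexOn ℝ Set.univ (a i))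
    (ha_mono : ∀ i, Monotone (a i))
    (hWv : ∀ i j l, 0 ≤ Wv i j l)
    (hs : ∀ i l, 0 ≤ s i l)
    (hv0 : ∀ j : Fin (d 0), ∃ (w : Fin n → ℝ) (b : ℝ),
      ∀ α : Fin n → ℝ, v 0 α j = (∑ l, w l * α l) + b)
    (hrec : ∀ i < k, ∀ (α : Fin n → ℝ) (j : Fin (d (i + 1))),
      v (i + 1) α j = a i ((∑ l, Wv i j l * (v i α l * s i l)) +
        (∑ l, Wα i j l * (α l * t i l)) + c i j)) :
    ∀ j : Fin (d k), ConvexOn ℝ Set.univ (fun α : Fin n → ℝ => v k α j) := by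
  induction k with
  | zero =>
    intro j
    obtain ⟨w, b, hw⟩ := hv0 j
    have := picnn_affine_convexOn w b
    simpa [← hw] using this
  | succ k ih =>
    intro j
    have ih' := ih (fun i hi => hrec i (Nat.lt_succ_of_lt hi))
    have hk := hrec k (Nat.lt_succ_self k)
    have hinner : ConvexOn ℝ Set.univ (fun α : Fin n → ℝ =>
        (∑ l, Wv k j l * (v k α l * s k l)) +
        (∑ l, Wα k j l * (α l * t k l)) + c k j) := by
      have h1 : ConvexOn ℝ Set.univ (fun α : Fin n → ℝ =>
          ∑ l, Wv k j l * (v k α l * s k l)) := by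
        apply picnn_sum_convexOn
        intro l _
        have := (ih' l).smul (c := Wv k j l * s k l)
          (mul_nonneg (hWv k j l) (hs k l))
        simpa [smul_eq_mul, mul_assoc, mul_comm, mul_left_comm] using this
      have h2 : ConvexOn ℝ Set.univ (fun α : Fin n → ℝ =>
          (∑ l, Wα k j l * (α l * t k l)) + c k j) := by
        have : ∀ α : Fin n → ℝ, (∑ l, Wα k j l * (α l * t k l)) + c k j
            = (∑ l, (Wα k j l * t k l) * α l) + c k j := by
          intro α; congr 1; apply Finset.sum_congr rfl; intro l _; ring
        simpa [this] using picnn_affine_convexOn (fun l => Wα k j l * t k l) (c k j)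
      have := h1.add h2
      simpa [add_assoc, Pi.add_def] using this
    have := picnn_comp_convexOn (ha_conv k) (ha_mono k) hinner
    simpa [← hk] using this
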